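/- Let ℓ be an odd prime and z a primitive ℓ-th root of unity over ℚ. Then every square submatrix of the ℓ × ℓ matrix M with entries M_{ij} = z^{ij} (indices i, j running over ℤ/ℓ) has nonzero determinant (Chebotarëv's theorem on roots of unity). -/

import Mathlib

open Polynomial Finset Matrix

/-- a finset of naturals of card `k` has sum at least `0+1+...+(k-1)`. -/
private lemma aux_range_sum_le (S : Finset ℕ) : ∑ i ∈ range S.card, i ≤ ∑ i ∈ S, i := by
  generalize h : S.card = n₀
  induction n₀ generalizing S with
  | zero => simp
  | succ n ih =>
    have hne : S.Nonempty := by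
      rw [← Finset.card_pos, h]; omega
    set Mx := S.max' hne with hMx
    have hmem : Mx ∈ S := S.max'_mem hne
    have hcard : (S.erase Mx).card = n := by
      rw [Finset.card_erase_of_mem hmem, h]
      omega
    have hsub : S ⊆ Finset.range (Mx + 1) := by
      intro x hx
      simpa [Nat.lt_succ_iff] using S.le_max' x hx
    have hMxk : n ≤ Mx := by
      have := Finset.card_le_card hsub
      simp [h, Finset.card_range] at this
      omega
    have h2 := ih (S.erase Mx) hcard
    have hsum : ∑ i ∈ S, i = Mx + ∑ i ∈ S.erase Mx, i := by
      exact (Finset.add_sum_erase _ (fun x => x) hmem).symm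
    rw [Finset.sum_range_succ, hsum]
    omega

/-- an injective tuple of naturals has sum at least `0+1+...+(k-1)`. -/
private lemma aux_inj_sum_le {k : ℕ} (e : Fin k → ℕ) (he : Function.Injective e) :
    ∑ i : Fin k, (i : ℕ) ≤ ∑ i, e i := by
  have h1 : ∑ i : Fin k, e i = ∑ x ∈ Finset.univ.image e, x := by
    rw [Finset.sum_image (fun a _ b _ hab => he hab)]
  have h2 : (Finset.univ.image e).card = k := by
    rw [Finset.card_image_of_injective _ he, Finset.card_univ, Fintype.card_fin]
  have := aux_range_sum_le (Finset.univ.image e)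
  rw [h2] at this
  calc ∑ i : Fin k, (i : ℕ) = ∑ i ∈ range k, i := Fin.sum_univ_eq_sum_range (fun i => i) k
    _ ≤ ∑ x ∈ Finset.univ.image e, x := this
    _ = ∑ i, e i := h1.symm

/-- If `s+1` rows of a square matrix over `ℚ` lie in the span of `s` vectors,
the determinant vanishes. -/
private lemma aux_det_zero_of_rows_in_span {k s : ℕ} (A : Matrix (Fin k) (Fin k) ℚ)
    (w : Fin s → (Fin k → ℚ)) (τ : Fin (s + 1) → Fin k) (hτ : Function.Injective τ)
    (hrow : ∀ l, A (τ l) ∈ Submodule.span ℚ (Set.range w)) : A.det = 0 := by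
  by_contra hdet
  have h1 : ¬ LinearIndependent ℚ (fun l : Fin (s + 1) => A (τ l)) := by
    intro hLI
    have h2 : LinearIndependent ℚ (fun l : Fin (s + 1) =>
        (⟨A (τ l), hrow l⟩ : Submodule.span ℚ (Set.range w))) :=
      hLI.of_comp (Submodule.span ℚ (Set.range w)).subtype
    have h3 := h2.fintype_card_le_finrank
    have h4 : Module.finrank ℚ (Submodule.span ℚ (Set.range w)) ≤ s := by
      simpa [Set.finrank] using finrank_range_le_card w
    simp [Fintype.card_fin] at h3
    omega
  have h3 : ¬ LinearIndependent ℚ (fun i : Fin k => A i) := fun h => h1 (h.comp τ hτ)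
  obtain ⟨g, hsum, i0, hi0⟩ := Fintype.not_linearIndependent_iff.mp h3
  apply hdet
  rw [← Matrix.exists_vecMul_eq_zero_iff]
  refine ⟨g, ?_, ?_⟩
  · intro hg0
    exact hi0 (by rw [hg0]; rfl)
  · funext j
    have := congrFun hsum j
    simpa [Matrix.vecMul, dotProduct, Finset.sum_apply] using this

/-- decomposition of binomial coefficients as polynomials. -/
private lemma aux_choose_eq_sum (a m : ℕ) :
    ((a.choose m : ℚ)) = ∑ e ∈ range (m + 1),
      ((descPochhammer ℚ m).coeff e / (m.factorial : ℚ)) * (a : ℚ) ^ e := by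
  have h1 : (descPochhammer ℚ m).eval (a : ℚ) = (a.descFactorial m : ℚ) := by
    exact_mod_cast descPochhammer_eval_eq_descFactorial ℚ a m
  have h2 : (a.descFactorial m : ℚ) = (m.factorial : ℚ) * (a.choose m : ℚ) := by
    exact_mod_cast congrArg (Nat.cast : ℕ → ℚ) (Nat.descFactorial_eq_factorial_mul_choose a m)
  have h3 : (descPochhammer ℚ m).eval (a : ℚ) =
      ∑ e ∈ range (m + 1), (descPochhammer ℚ m).coeff e * (a : ℚ) ^ e := by
    rw [Polynomial.eval_eq_sum_range]
    rw [descPochhammer_natDegree]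
  have hm : (m.factorial : ℚ) ≠ 0 := Nat.cast_ne_zero.mpr m.factorial_ne_zero
  rw [Finset.sum_congr rfl (fun e _ => by ring : ∀ e ∈ range (m+1),
    ((descPochhammer ℚ m).coeff e / (m.factorial : ℚ)) * (a : ℚ) ^ e
      = ((descPochhammer ℚ m).coeff e * (a:ℚ)^e) / (m.factorial : ℚ)),
    ← Finset.sum_div, ← h3, h1, h2]
  field_simp

private lemma aux_dp_lead (m : ℕ) : (descPochhammer ℚ m).coeff m = 1 := by
  have h1 := monic_descPochhammer ℚ m
  have h2 := descPochhammer_natDegree ℚ m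
  have h3 : (descPochhammer ℚ m).leadingCoeff = 1 := h1
  rwa [Polynomial.leadingCoeff, h2] at h3

/-- Vanishing lemma: if there are `s+1` rows whose parameter `g` is `< s`,
the binomial-coefficient determinant vanishes. -/
private lemma aux_det_choose_zero {k : ℕ} (Rf Cf g : Fin k → ℕ) {s : ℕ}
    (τ : Fin (s + 1) → Fin k) (hτ : Function.Injective τ) (hg : ∀ l, g (τ l) < s) :
    (Matrix.of fun i j => (((Rf i * Cf j).choose (g i) : ℕ) : ℚ)).det = 0 := by
  apply aux_det_zero_of_rows_in_span _ (fun (e : Fin s) (j : Fin k) => (Cf j : ℚ) ^ (e : ℕ)) τ hτ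
  intro l
  have hrow : (Matrix.of fun i j => (((Rf i * Cf j).choose (g i) : ℕ) : ℚ)) (τ l)
      = ∑ e ∈ range (g (τ l) + 1),
        (((descPochhammer ℚ (g (τ l))).coeff e / ((g (τ l)).factorial : ℚ)) * (Rf (τ l) : ℚ) ^ e) •
          (fun j : Fin k => (Cf j : ℚ) ^ e) := by
    funext j
    rw [Finset.sum_apply]
    simp only [Pi.smul_apply, smul_eq_mul, Matrix.of_apply]
    rw [aux_choose_eq_sum]
    apply Finset.sum_congr rfl
    intro e _
    push_cast
    ring
  rw [hrow]
  apply Submodule.sum_mem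
  intro e he
  apply Submodule.smul_mem
  apply Submodule.subset_span
  refine ⟨⟨e, ?_⟩, rfl⟩
  have := Finset.mem_range.mp he
  have := hg l
  omega

/-- Trichotomy for tuples of naturals: either (after sorting) an initial segment is small,
or the sum exceeds `0+1+...+(k-1)`, or the tuple is a permutation of `(0,1,...,k-1)`. -/
private lemma aux_trichotomy {k : ℕ} (g : Fin k → ℕ) :
    (∃ (s : ℕ) (τ : Fin (s + 1) → Fin k), Function.Injective τ ∧ ∀ l, g (τ l) < s)
    ∨ ((∑ i : Fin k, (i : ℕ)) < ∑ i, g i)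
    ∨ (∃ π : Equiv.Perm (Fin k), g = fun i => ((π i : Fin k) : ℕ)) := by
  set σ := Tuple.sort g with hσ
  have hmono : Monotone (g ∘ σ) := Tuple.monotone_sort g
  by_cases hcase : ∃ s : Fin k, g (σ s) < (s : ℕ)
  · left
    obtain ⟨s, hs⟩ := hcase
    have hsk : (s : ℕ) + 1 ≤ k := s.isLt
    refine ⟨(s : ℕ), fun l => σ (Fin.castLE hsk l), ?_, ?_⟩
    · exact fun a b hab => Fin.castLE_injective hsk (σ.injective hab)
    · intro l
      have hle : (Fin.castLE hsk l : Fin k) ≤ s := by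
        rw [Fin.le_def]
        simpa using Nat.lt_succ_iff.mp l.isLt
      calc g (σ (Fin.castLE hsk l)) ≤ g (σ s) := hmono hle
        _ < (s : ℕ) := hs
  · push_neg at hcase
    have hsum : ∑ i : Fin k, g (σ i) = ∑ i, g i := Equiv.sum_comp σ g
    by_cases hstrict : ∃ s : Fin k, (s : ℕ) < g (σ s)
    · right; left
      calc ∑ i : Fin k, (i : ℕ) < ∑ i : Fin k, g (σ i) :=
            Finset.sum_lt_sum (fun i _ => hcase i) ⟨hstrict.choose, Finset.mem_univ _,
              hstrict.choose_spec⟩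
        _ = ∑ i, g i := hsum
    · push_neg at hstrict
      right; right
      refine ⟨σ.symm, ?_⟩
      funext i
      have h1 : g (σ (σ.symm i)) = ((σ.symm i : Fin k) : ℕ) :=
        le_antisymm (hstrict (σ.symm i)) (hcase (σ.symm i))
      simpa using h1

/-- Computation lemma: the binomial-coefficient determinant for a permutation tuple. -/
private lemma aux_det_choose_perm {k : ℕ} (Rf Cf : Fin k → ℕ) (π : Equiv.Perm (Fin k)) :
    (Matrix.of fun i j => (((Rf i * Cf j).choose ((π i : Fin k) : ℕ) : ℕ) : ℚ)).det
      = ((Equiv.Perm.sign π : ℤ) : ℚ) * (∏ i, (Rf i : ℚ) ^ ((π i : Fin k) : ℕ))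
        * (∏ i : Fin k, (((i : ℕ).factorial : ℕ) : ℚ))⁻¹
        * (Matrix.of fun i j : Fin k => (Cf j : ℚ) ^ (i : ℕ)).det := by
  classical
  set m : Fin k → ℕ := fun i => ((π i : Fin k) : ℕ) with hm
  set w : ℕ → (Fin k → ℚ) := fun e j => (Cf j : ℚ) ^ e with hw
  set c : Fin k → ℕ → ℚ :=
    fun i e => ((descPochhammer ℚ (m i)).coeff e / ((m i).factorial : ℚ)) * (Rf i : ℚ) ^ e with hc
  have hrow : (Matrix.of fun i j => (((Rf i * Cf j).choose (m i) : ℕ) : ℚ))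
      = fun i => ∑ e ∈ range (m i + 1), c i e • w e := by
    funext i j
    rw [Finset.sum_apply]
    simp only [Pi.smul_apply, smul_eq_mul, Matrix.of_apply, hc, hw]
    rw [aux_choose_eq_sum]
    apply Finset.sum_congr rfl
    intro e _
    push_cast
    ring
  have hdet : (Matrix.of fun i j => (((Rf i * Cf j).choose (m i) : ℕ) : ℚ)).det
      = Matrix.detRowAlternating (fun i => ∑ e ∈ range (m i + 1), c i e • w e) := by
    rw [← hrow]
    rfl
  have expand := (Matrix.detRowAlternating (R := ℚ) (n := Fin k)).toMultilinearMap.map_sum_finset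
    (fun i e => c i e • w e) (fun i => range (m i + 1))
  rw [hdet]
  rw [show (Matrix.detRowAlternating (R := ℚ) (n := Fin k))
        (fun i => ∑ e ∈ range (m i + 1), c i e • w e)
      = (Matrix.detRowAlternating (R := ℚ) (n := Fin k)).toMultilinearMap
        (fun i => ∑ e ∈ range (m i + 1), c i e • w e) from rfl, expand]
  -- each term is a det
  have hterm : ∀ r : Fin k → ℕ,
      (Matrix.detRowAlternating (R := ℚ) (n := Fin k)).toMultilinearMap
        (fun i => c i (r i) • w (r i))
      = (∏ i, c i (r i)) * (Matrix.of fun i j => (Cf j : ℚ) ^ (r i)).det := by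
    intro r
    have : (fun i => c i (r i) • w (r i))
        = (Matrix.of fun i j => c i (r i) * ((Matrix.of fun i' j' => (Cf j' : ℚ) ^ (r i')) i j)) := by
      funext i j; simp [hw, mul_comm]
    rw [show (Matrix.detRowAlternating (R := ℚ) (n := Fin k)).toMultilinearMap
          (fun i => c i (r i) • w (r i))
        = ((Matrix.of fun i j => c i (r i) *
            ((Matrix.of fun i' j' => (Cf j' : ℚ) ^ (r i')) i j))).det from by rw [← this]; rfl]
    exact Matrix.det_mul_column _ _
  rw [Finset.sum_congr rfl (fun r _ => hterm r)]
  -- only r = m survives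
  rw [Finset.sum_eq_single_of_mem m (by
    rw [Fintype.mem_piFinset]; intro i; exact Finset.mem_range.mpr (Nat.lt_succ_self _))]
  · -- main term
    have hprod : (∏ i, c i (m i))
        = (∏ i : Fin k, (((i : ℕ).factorial : ℕ) : ℚ))⁻¹ * ∏ i, (Rf i : ℚ) ^ (m i) := by
      have h1 : ∀ i, c i (m i) = (((m i).factorial : ℚ))⁻¹ * (Rf i : ℚ) ^ (m i) := by
        intro i
        show (descPochhammer ℚ (m i)).coeff (m i) / ((m i).factorial : ℚ) * (Rf i : ℚ) ^ (m i) = _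
        rw [aux_dp_lead, one_div]
      rw [Finset.prod_congr rfl (fun i _ => h1 i), Finset.prod_mul_distrib]
      congr 1
      rw [Finset.prod_inv_distrib]
      exact congrArg Inv.inv (Equiv.prod_comp π (fun x : Fin k => (((x : ℕ).factorial : ℕ) : ℚ)))
    have hperm : (Matrix.of fun i j => (Cf j : ℚ) ^ (m i)).det
        = ((Equiv.Perm.sign π : ℤ) : ℚ) * (Matrix.of fun i j : Fin k => (Cf j : ℚ) ^ (i : ℕ)).det := by
      have : (Matrix.of fun i j => (Cf j : ℚ) ^ (m i))
          = (Matrix.of fun i j : Fin k => (Cf j : ℚ) ^ (i : ℕ)).submatrix π id := by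
        funext i j; rfl
      rw [this, Matrix.det_permute]
    rw [hprod, hperm]
    ring
  · -- other terms vanish
    intro b hbmem hbne
    by_cases hinj : Function.Injective b
    · exfalso
      apply hbne
      funext i
      have hble : ∀ i ∈ Finset.univ, b i ≤ m i := by
        intro i _
        have := Finset.mem_range.mp (Fintype.mem_piFinset.mp hbmem i)
        omega
      have hsm : ∑ i, m i = ∑ i : Fin k, (i : ℕ) := Equiv.sum_comp π (fun x : Fin k => (x : ℕ))
      have h1 : ∑ i, b i ≤ ∑ i, m i := Finset.sum_le_sum hble
      have h2 : ∑ i : Fin k, (i : ℕ) ≤ ∑ i, b i := aux_inj_sum_le b hinj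
      have h3 : ∑ i, b i = ∑ i, m i := by omega
      exact ((Finset.sum_eq_sum_iff_of_le hble).mp h3 i (Finset.mem_univ i))
    · obtain ⟨i1, i2, hbeq, hne⟩ : ∃ i1 i2, b i1 = b i2 ∧ i1 ≠ i2 := by
        simp only [Function.Injective, not_forall] at hinj
        obtain ⟨i1, i2, h1, h2⟩ := hinj
        exact ⟨i1, i2, h1, h2⟩
      have : (Matrix.of fun i j => (Cf j : ℚ) ^ (b i)).det = 0 := by
        apply Matrix.det_zero_of_row_eq hne
        funext j
        simp [hbeq]
      rw [this, mul_zero]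

/-- Coefficient expansion of the determinant of the matrix `((1+X)^{R_i C_j})`. -/
private lemma aux_coeff_det {k B : ℕ} (Rf Cf : Fin k → ℕ) (hB : ∀ i j, Rf i * Cf j < B)
    (mm : ℕ) :
    ((Matrix.of fun i j : Fin k => ((1 : ℚ[X]) + X) ^ (Rf i * Cf j)).det).coeff mm
    = ∑ g ∈ Fintype.piFinset (fun _ : Fin k => range B),
        (if ∑ i, g i = mm
          then (Matrix.of fun i j => (((Rf i * Cf j).choose (g i) : ℕ) : ℚ)).det else 0) := by
  classical
  have hentry : ∀ a : ℕ, a < B → ((1 : ℚ[X]) + X) ^ a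
      = ∑ e ∈ range B, Polynomial.C (((a.choose e : ℕ)) : ℚ) * X ^ e := by
    intro a ha
    ext n
    rw [Polynomial.coeff_one_add_X_pow]
    rw [Polynomial.finset_sum_coeff]
    simp only [Polynomial.coeff_C_mul, Polynomial.coeff_X_pow, mul_ite, mul_one, mul_zero]
    rw [Finset.sum_ite_eq (range B) n (fun e => ((a.choose e : ℕ) : ℚ))]
    by_cases hn : n ∈ range B
    · rw [if_pos hn]
    · rw [if_neg hn]
      have : a < n := by
        have := Finset.mem_range.not.mp hn
        omega
      rw [Nat.choose_eq_zero_of_lt this]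
      norm_num
  have hrow : (Matrix.of fun i j : Fin k => ((1 : ℚ[X]) + X) ^ (Rf i * Cf j))
      = fun i => ∑ e ∈ range B,
          (fun j => Polynomial.C (((Rf i * Cf j).choose e : ℕ) : ℚ) * X ^ e) := by
    funext i j
    have := hentry (Rf i * Cf j) (hB i j)
    simpa [Finset.sum_apply] using this
  have expand := (Matrix.detRowAlternating (R := ℚ[X]) (n := Fin k)).toMultilinearMap.map_sum_finset
    (fun i e => (fun j => Polynomial.C (((Rf i * Cf j).choose e : ℕ) : ℚ) * X ^ e))
    (fun _ : Fin k => range B)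
  have hdet : (Matrix.of fun i j : Fin k => ((1 : ℚ[X]) + X) ^ (Rf i * Cf j)).det
      = ∑ g ∈ Fintype.piFinset (fun _ : Fin k => range B),
        (Matrix.detRowAlternating (R := ℚ[X]) (n := Fin k)).toMultilinearMap
          (fun i => (fun j => Polynomial.C (((Rf i * Cf j).choose (g i) : ℕ) : ℚ) * X ^ (g i))) := by
    rw [show (Matrix.of fun i j : Fin k => ((1 : ℚ[X]) + X) ^ (Rf i * Cf j)).det
        = (Matrix.detRowAlternating (R := ℚ[X]) (n := Fin k)).toMultilinearMap
          (fun i => ∑ e ∈ range B,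
            (fun j => Polynomial.C (((Rf i * Cf j).choose e : ℕ) : ℚ) * X ^ e)) from by
      rw [← hrow]; rfl]
    exact expand
  have hterm : ∀ g : Fin k → ℕ,
      (Matrix.detRowAlternating (R := ℚ[X]) (n := Fin k)).toMultilinearMap
        (fun i => (fun j => Polynomial.C (((Rf i * Cf j).choose (g i) : ℕ) : ℚ) * X ^ (g i)))
      = X ^ (∑ i, g i) *
        Polynomial.C ((Matrix.of fun i j => (((Rf i * Cf j).choose (g i) : ℕ) : ℚ)).det) := by
    intro g
    have h1 : (fun i => (fun j => Polynomial.C (((Rf i * Cf j).choose (g i) : ℕ) : ℚ) * X ^ (g i)))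
        = (Matrix.of fun i j => (X : ℚ[X]) ^ (g i) *
            ((Matrix.of fun i' j' => Polynomial.C ((((Rf i' * Cf j').choose (g i') : ℕ)) : ℚ)) i j)) := by
      funext i j
      simp [mul_comm]
    rw [show (Matrix.detRowAlternating (R := ℚ[X]) (n := Fin k)).toMultilinearMap
          (fun i => (fun j => Polynomial.C (((Rf i * Cf j).choose (g i) : ℕ) : ℚ) * X ^ (g i)))
        = ((Matrix.of fun i j => (X : ℚ[X]) ^ (g i) *
            ((Matrix.of fun i' j' => Polynomial.C ((((Rf i' * Cf j').choose (g i') : ℕ)) : ℚ)) i j))).det from by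
      rw [← h1]; rfl]
    rw [Matrix.det_mul_column]
    rw [Finset.prod_pow_eq_pow_sum]
    congr 1
    exact (RingHom.map_det (Polynomial.C : ℚ →+* ℚ[X]) _).symm
  rw [hdet, Polynomial.finset_sum_coeff]
  apply Finset.sum_congr rfl
  intro g _
  rw [hterm g]
  rw [mul_comm, Polynomial.coeff_C_mul_X_pow]
  by_cases hg : ∑ i, g i = mm
  · rw [if_pos hg, if_pos (by omega)]
  · rw [if_neg hg, if_neg (by omega)]

/-- Chebotarëv's theorem on roots of unity: every square submatrix of the
DFT matrix `(z^{ij})` for a primitive `ℓ`-th root of unity, `ℓ` an odd prime,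
has nonzero determinant. -/
theorem chebotarev_roots_of_unity
    (ℓ : ℕ) [Fact (Nat.Prime ℓ)] (hodd : Odd ℓ)
    (z : ℂ) (hz : IsPrimitiveRoot z ℓ)
    (M : Matrix (ZMod ℓ) (ZMod ℓ) ℂ) (hM : ∀ i j, M i j = z ^ (i * j).val)
    (k : ℕ) (ri ci : Fin k → ZMod ℓ)
    (hri : Function.Injective ri) (hci : Function.Injective ci) :
    (M.submatrix ri ci).det ≠ 0 := by
  classical
  intro hD
  have hp : Nat.Prime ℓ := Fact.out
  haveI : NeZero ℓ := ⟨hp.ne_zero⟩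
  have hk : k ≤ ℓ := by
    have := Fintype.card_le_of_injective ri hri
    simpa [ZMod.card] using this
  set Rf : Fin k → ℕ := fun i => (ri i).val with hRf
  set Cf : Fin k → ℕ := fun j => (ci j).val with hCf
  set B : ℕ := ℓ * ℓ with hB
  have hBlt : ∀ i j, Rf i * Cf j < B := by
    intro i j
    exact mul_lt_mul'' (ZMod.val_lt _) (ZMod.val_lt _) (Nat.zero_le _) (Nat.zero_le _)
  set N : ℕ := ∑ i : Fin k, (i : ℕ) with hN
  set Pz : ℤ[X] := (Matrix.of fun i j : Fin k => ((1 : ℤ[X]) + X) ^ (Rf i * Cf j)).det with hPz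
  -- rational version and its coefficients
  have hmap : Pz.map (Int.castRingHom ℚ)
      = (Matrix.of fun i j : Fin k => ((1 : ℚ[X]) + X) ^ (Rf i * Cf j)).det := by
    have h0 := RingHom.map_det (Polynomial.mapRingHom (Int.castRingHom ℚ))
      (Matrix.of fun i j : Fin k => ((1 : ℤ[X]) + X) ^ (Rf i * Cf j))
    rw [show Pz.map (Int.castRingHom ℚ)
        = Polynomial.mapRingHom (Int.castRingHom ℚ) Pz from rfl, hPz, h0]
    congr 1
    funext i j
    simp [Matrix.map_apply, Polynomial.map_pow]
  have hcoeffQ : ∀ mq : ℕ, ((Pz.coeff mq : ℤ) : ℚ)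
      = ((Matrix.of fun i j : Fin k => ((1 : ℚ[X]) + X) ^ (Rf i * Cf j)).det).coeff mq := by
    intro mq
    rw [← hmap, Polynomial.coeff_map]
    rfl
  -- low coefficients vanish
  have hlow : ∀ mq, mq < N → Pz.coeff mq = 0 := by
    intro mq hmq
    have hq := aux_coeff_det Rf Cf hBlt mq
    rw [← hcoeffQ mq] at hq
    have hzero : ∀ g ∈ Fintype.piFinset (fun _ : Fin k => range B),
        (if ∑ i, g i = mq
          then (Matrix.of fun i j => (((Rf i * Cf j).choose (g i) : ℕ) : ℚ)).det else 0) = 0 := by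
      intro g _
      by_cases hg : ∑ i, g i = mq
      · rw [if_pos hg]
        rcases aux_trichotomy g with ⟨s, τ, hτ, hlt⟩ | hgt | ⟨π, hπ⟩
        · exact aux_det_choose_zero Rf Cf g τ hτ hlt
        · omega
        · exfalso
          have hsg : ∑ i, g i = N := by
            rw [hπ]
            exact Equiv.sum_comp π (fun x : Fin k => (x : ℕ))
          omega
      · rw [if_neg hg]
    rw [Finset.sum_eq_zero hzero] at hq
    exact_mod_cast hq
  -- coefficient N
  set cz : ℤ := Pz.coeff N with hcz
  have hsumN : ∀ π : Equiv.Perm (Fin k), ∑ i, ((π i : Fin k) : ℕ) = N :=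
    fun π => Equiv.sum_comp π (fun x : Fin k => (x : ℕ))
  have hcNQ : (cz : ℚ)
      = (∏ i : Fin k, (((i : ℕ).factorial : ℕ) : ℚ))⁻¹
        * ((Matrix.of fun a b : Fin k => (Rf b : ℚ) ^ (a : ℕ)).det
          * (Matrix.of fun i j : Fin k => (Cf j : ℚ) ^ (i : ℕ)).det) := by
    have hq := aux_coeff_det Rf Cf hBlt N
    rw [← hcoeffQ N] at hq
    set T : Finset (Fin k → ℕ) :=
      Finset.image (fun π : Equiv.Perm (Fin k) => fun i => ((π i : Fin k) : ℕ)) Finset.univ with hT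
    have hTsub : T ⊆ Fintype.piFinset (fun _ : Fin k => range B) := by
      intro g hg
      rw [hT, Finset.mem_image] at hg
      obtain ⟨π, _, rfl⟩ := hg
      rw [Fintype.mem_piFinset]
      intro i
      rw [Finset.mem_range]
      calc ((π i : Fin k) : ℕ) < k := (π i).isLt
        _ ≤ ℓ := hk
        _ ≤ B := Nat.le_mul_of_pos_left ℓ hp.pos
    have hvan : ∀ g ∈ Fintype.piFinset (fun _ : Fin k => range B), g ∉ T →
        (if ∑ i, g i = N
          then (Matrix.of fun i j => (((Rf i * Cf j).choose (g i) : ℕ) : ℚ)).det else 0) = 0 := by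
      intro g _ hgT
      by_cases hg : ∑ i, g i = N
      · rw [if_pos hg]
        rcases aux_trichotomy g with ⟨s, τ, hτ, hlt⟩ | hgt | ⟨π, hπ⟩
        · exact aux_det_choose_zero Rf Cf g τ hτ hlt
        · omega
        · exfalso
          apply hgT
          rw [hT, Finset.mem_image]
          exact ⟨π, Finset.mem_univ _, hπ.symm⟩
      · rw [if_neg hg]
    rw [← Finset.sum_subset hTsub hvan] at hq
    have hinj : Set.InjOn (fun π : Equiv.Perm (Fin k) => fun i => ((π i : Fin k) : ℕ))
        (Finset.univ : Finset (Equiv.Perm (Fin k))) := by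
      intro π _ π' _ h
      apply Equiv.ext
      intro i
      apply Fin.val_injective
      exact congrFun h i
    rw [hT, Finset.sum_image hinj] at hq
    have hterm : ∀ π : Equiv.Perm (Fin k),
        (if ∑ i, ((π i : Fin k) : ℕ) = N
          then (Matrix.of fun i j =>
            (((Rf i * Cf j).choose ((π i : Fin k) : ℕ) : ℕ) : ℚ)).det else 0)
        = ((Equiv.Perm.sign π : ℤ) : ℚ) * (∏ i, (Rf i : ℚ) ^ ((π i : Fin k) : ℕ))
          * (∏ i : Fin k, (((i : ℕ).factorial : ℕ) : ℚ))⁻¹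
          * (Matrix.of fun i j : Fin k => (Cf j : ℚ) ^ (i : ℕ)).det := by
      intro π
      rw [if_pos (hsumN π)]
      exact aux_det_choose_perm Rf Cf π
    rw [Finset.sum_congr rfl (fun π _ => hterm π)] at hq
    have hvdR : (Matrix.of fun a b : Fin k => (Rf b : ℚ) ^ (a : ℕ)).det
        = ∑ π : Equiv.Perm (Fin k),
            ((Equiv.Perm.sign π : ℤ) : ℚ) * ∏ i, (Rf i : ℚ) ^ ((π i : Fin k) : ℕ) := by
      rw [Matrix.det_apply]
      apply Finset.sum_congr rfl
      intro π _
      rw [Units.smul_def, zsmul_eq_mul]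
      rfl
    rw [hq, hvdR, Finset.sum_mul, Finset.mul_sum]
    apply Finset.sum_congr rfl
    intro π _
    ring
  -- the key arithmetic fact: ℓ does not divide cz
  have hknd : ¬ ((ℓ : ℤ) ∣ cz) := by
    have hfactQ : (∏ i : Fin k, (((i : ℕ).factorial : ℕ) : ℚ)) ≠ 0 := by
      apply Finset.prod_ne_zero_iff.mpr
      intro i _
      exact Nat.cast_ne_zero.mpr (Nat.factorial_ne_zero _)
    -- integer-level identity
    have hZ : (∏ i : Fin k, (((i : ℕ).factorial : ℕ) : ℤ)) * cz
        = (Matrix.of fun a b : Fin k => ((Rf b : ℕ) : ℤ) ^ (a : ℕ)).det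
          * (Matrix.of fun i j : Fin k => ((Cf j : ℕ) : ℤ) ^ (i : ℕ)).det := by
      have cast1 : (((Matrix.of fun a b : Fin k => ((Rf b : ℕ) : ℤ) ^ (a : ℕ)).det : ℤ) : ℚ)
          = (Matrix.of fun a b : Fin k => (Rf b : ℚ) ^ (a : ℕ)).det := by
        calc (((Matrix.of fun a b : Fin k => ((Rf b : ℕ) : ℤ) ^ (a : ℕ)).det : ℤ) : ℚ)
            = (Int.castRingHom ℚ) (Matrix.of fun a b : Fin k => ((Rf b : ℕ) : ℤ) ^ (a : ℕ)).det :=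
              rfl
          _ = ((Matrix.of fun a b : Fin k => ((Rf b : ℕ) : ℤ) ^ (a : ℕ)).map
                (Int.castRingHom ℚ)).det := RingHom.map_det _ _
          _ = (Matrix.of fun a b : Fin k => (Rf b : ℚ) ^ (a : ℕ)).det := by
              congr 1
              funext a b
              simp [Matrix.map_apply]
      have cast2 : (((Matrix.of fun i j : Fin k => ((Cf j : ℕ) : ℤ) ^ (i : ℕ)).det : ℤ) : ℚ)
          = (Matrix.of fun i j : Fin k => (Cf j : ℚ) ^ (i : ℕ)).det := by
        calc (((Matrix.of fun i j : Fin k => ((Cf j : ℕ) : ℤ) ^ (i : ℕ)).det : ℤ) : ℚ)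
            = (Int.castRingHom ℚ) (Matrix.of fun i j : Fin k => ((Cf j : ℕ) : ℤ) ^ (i : ℕ)).det :=
              rfl
          _ = ((Matrix.of fun i j : Fin k => ((Cf j : ℕ) : ℤ) ^ (i : ℕ)).map
                (Int.castRingHom ℚ)).det := RingHom.map_det _ _
          _ = (Matrix.of fun i j : Fin k => (Cf j : ℚ) ^ (i : ℕ)).det := by
              congr 1
              funext a b
              simp [Matrix.map_apply]
      apply @Int.cast_injective ℚ _
      rw [Int.cast_mul, Int.cast_mul, cast1, cast2, hcNQ]
      push_cast
      field_simp
    -- reduce mod ℓ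
    intro hdvd
    have hmod := congrArg (fun t : ℤ => (t : ZMod ℓ)) hZ
    simp only [Int.cast_mul] at hmod
    have hcz0 : ((cz : ℤ) : ZMod ℓ) = 0 := by
      exact_mod_cast (ZMod.intCast_zmod_eq_zero_iff_dvd cz ℓ).mpr hdvd
    rw [hcz0, mul_zero] at hmod
    -- but the right-hand side is nonzero
    have castR : (((Matrix.of fun a b : Fin k => ((Rf b : ℕ) : ℤ) ^ (a : ℕ)).det : ℤ) : ZMod ℓ)
        = (Matrix.of fun a b : Fin k => (ri b) ^ (a : ℕ)).det := by
      calc (((Matrix.of fun a b : Fin k => ((Rf b : ℕ) : ℤ) ^ (a : ℕ)).det : ℤ) : ZMod ℓ)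
          = (Int.castRingHom (ZMod ℓ))
              (Matrix.of fun a b : Fin k => ((Rf b : ℕ) : ℤ) ^ (a : ℕ)).det := rfl
        _ = ((Matrix.of fun a b : Fin k => ((Rf b : ℕ) : ℤ) ^ (a : ℕ)).map
              (Int.castRingHom (ZMod ℓ))).det := RingHom.map_det _ _
        _ = (Matrix.of fun a b : Fin k => (ri b) ^ (a : ℕ)).det := by
            congr 1
            funext a b
            have h9 : ((Rf b : ℕ) : ZMod ℓ) = ri b := ZMod.natCast_rightInverse (ri b)
            simp [Matrix.map_apply, ← h9]
    have castC : (((Matrix.of fun i j : Fin k => ((Cf j : ℕ) : ℤ) ^ (i : ℕ)).det : ℤ) : ZMod ℓ)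
        = (Matrix.of fun i j : Fin k => (ci j) ^ (i : ℕ)).det := by
      calc (((Matrix.of fun i j : Fin k => ((Cf j : ℕ) : ℤ) ^ (i : ℕ)).det : ℤ) : ZMod ℓ)
          = (Int.castRingHom (ZMod ℓ))
              (Matrix.of fun i j : Fin k => ((Cf j : ℕ) : ℤ) ^ (i : ℕ)).det := rfl
        _ = ((Matrix.of fun i j : Fin k => ((Cf j : ℕ) : ℤ) ^ (i : ℕ)).map
              (Int.castRingHom (ZMod ℓ))).det := RingHom.map_det _ _
        _ = (Matrix.of fun i j : Fin k => (ci j) ^ (i : ℕ)).det := by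
            congr 1
            funext a b
            have h9 : ((Cf b : ℕ) : ZMod ℓ) = ci b := ZMod.natCast_rightInverse (ci b)
            simp [Matrix.map_apply, ← h9]
    have hvdne : ∀ (v : Fin k → ZMod ℓ), Function.Injective v →
        (Matrix.of fun a b : Fin k => (v b) ^ (a : ℕ)).det ≠ 0 := by
      intro v hv
      have : (Matrix.of fun a b : Fin k => (v b) ^ (a : ℕ)) = (Matrix.vandermonde v)ᵀ := by
        funext a b
        rfl
      rw [this, Matrix.det_transpose, Matrix.det_vandermonde]
      apply Finset.prod_ne_zero_iff.mpr
      intro i _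
      apply Finset.prod_ne_zero_iff.mpr
      intro j hj
      have hij : i ≠ j := ne_of_lt (Finset.mem_Ioi.mp hj)
      exact sub_ne_zero.mpr (fun h => hij (hv h.symm))
    rw [castR, castC] at hmod
    exact (mul_ne_zero (hvdne ri hri) (hvdne ci hci)) hmod.symm
  -- relate the determinant to Pz
  have hzmod : ∀ a : ℕ, z ^ a = z ^ (a % ℓ) := by
    intro a
    conv_lhs => rw [← Nat.div_add_mod a ℓ]
    rw [pow_add, pow_mul, hz.pow_eq_one, one_pow, one_mul]
  have hmatrix : (Matrix.of fun i j : Fin k => ((1 : ℤ[X]) + X) ^ (Rf i * Cf j)).map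
      ((Polynomial.aeval (z - 1) : ℤ[X] →ₐ[ℤ] ℂ).toRingHom) = M.submatrix ri ci := by
    funext i j
    have hval : (ri i * ci j).val = (Rf i * Cf j) % ℓ := by
      have h1 : ((Rf i * Cf j : ℕ) : ZMod ℓ) = ri i * ci j := by
        push_cast
        rw [ZMod.natCast_rightInverse (ri i), ZMod.natCast_rightInverse (ci j)]
      rw [← h1, ZMod.val_natCast]
    have h2 : (M.submatrix ri ci) i j = z ^ ((Rf i * Cf j) % ℓ) := by
      rw [Matrix.submatrix_apply, hM, hval]
    rw [Matrix.map_apply, h2, ← hzmod]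
    simp only [AlgHom.toRingHom_eq_coe, RingHom.coe_coe, Matrix.of_apply, map_pow, map_add,
      _root_.map_one, Polynomial.aeval_X]
    norm_num
  have hDz : Polynomial.aeval (z - 1) Pz = 0 := by
    calc Polynomial.aeval (z - 1) Pz
        = ((Polynomial.aeval (z - 1) : ℤ[X] →ₐ[ℤ] ℂ).toRingHom)
            (Matrix.of fun i j : Fin k => ((1 : ℤ[X]) + X) ^ (Rf i * Cf j)).det := rfl
      _ = ((Matrix.of fun i j : Fin k => ((1 : ℤ[X]) + X) ^ (Rf i * Cf j)).map
            ((Polynomial.aeval (z - 1) : ℤ[X] →ₐ[ℤ] ℂ).toRingHom)).det := RingHom.map_det _ _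
      _ = (M.submatrix ri ci).det := by rw [hmatrix]
      _ = 0 := hD
  -- conclude
  obtain ⟨Q, hQ⟩ : (X : ℤ[X]) ^ N ∣ Pz := Polynomial.X_pow_dvd_iff.mpr hlow
  have hcz0 : cz = Q.coeff 0 := by
    rw [hcz, hQ, ← Polynomial.coeff_X_pow_mul Q N 0]
    norm_num
  have hQz : Polynomial.aeval (z - 1) Q = 0 := by
    rw [hQ] at hDz
    rw [_root_.map_mul, map_pow, Polynomial.aeval_X] at hDz
    have hz1 : z - 1 ≠ 0 := sub_ne_zero.mpr (hz.ne_one hp.one_lt)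
    rcases mul_eq_zero.mp hDz with h | h
    · exact absurd (pow_eq_zero_iff (by
        intro hN0
        exact hz1 (by simpa [hN0] using h)
        ) |>.mp h) hz1
    · exact h
  set G : ℤ[X] := Q.comp (X - 1) with hG
  have haevalG : Polynomial.aeval z G = 0 := by
    rw [hG, Polynomial.aeval_comp]
    simpa using hQz
  have hint : IsIntegral ℤ z := by
    refine ⟨X ^ ℓ - Polynomial.C 1, Polynomial.monic_X_pow_sub_C 1 hp.ne_zero, ?_⟩
    simp [hz.pow_eq_one]
  have hdvd : minpoly ℤ z ∣ G := minpoly.isIntegrallyClosed_dvd hint haevalG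
  rw [← Polynomial.cyclotomic_eq_minpoly hz hp.pos] at hdvd
  obtain ⟨V, hV⟩ := hdvd
  have heval := congrArg (Polynomial.eval (1 : ℤ)) hV
  rw [Polynomial.eval_mul, Polynomial.eval_one_cyclotomic_prime] at heval
  have hG1 : G.eval 1 = Q.coeff 0 := by
    rw [hG, Polynomial.eval_comp]
    simp [Polynomial.coeff_zero_eq_eval_zero]
  apply hknd
  rw [hcz0, ← hG1]
  exact ⟨V.eval 1, heval⟩
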